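/- Let φ be a solution of EQ_{λ,n,q} on (0,∞). Then the energy E(t) = (1/2)·φ'(t)² − (λ/2)·φ(t)² + |φ(t)|^{q+1}/(q+1) is differentiable on (0,∞) with E'(t) = −(n−1)·((e^{2t}+1)/(e^{2t}−1))·φ'(t)² ≤ 0 for every t > 0; in particular, E is monotone nonincreasing on (0,∞). -/

import Mathlib

open Real Set

lemma abs_rpow_hasDerivAt {p : ℝ} (hp : 1 < p) (x : ℝ) :
    HasDerivAt (fun y : ℝ => |y| ^ p) (p * |x| ^ (p - 2) * x) x := by
  rcases lt_trichotomy x 0 with hx | hx | hx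
  · have hne : (-x) ≠ 0 := neg_ne_zero.mpr hx.ne
    have h1 : HasDerivAt (fun y : ℝ => (-y) ^ p) (p * (-x) ^ (p - 1) * (-1)) x := by
      have := (Real.hasDerivAt_rpow_const (p := p) (x := -x) (Or.inl hne)).comp x
        (hasDerivAt_neg x)
      simpa [mul_comm, Function.comp_def] using this
    have h2 : (fun y : ℝ => |y| ^ p) =ᶠ[nhds x] fun y => (-y) ^ p := by
      filter_upwards [Iio_mem_nhds hx] with y hy
      rw [abs_of_neg hy]
    refine (h1.congr_of_eventuallyEq h2).congr_deriv ?_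
    have : (-x) ^ (p - 1) = (-x) ^ (p - 2) * (-x) := by
      rw [← Real.rpow_add_one hne]; ring_nf
    rw [abs_of_neg hx, this]; ring
  · subst hx
    have h0 : |(0:ℝ)| ^ p = 0 := by
      simp [Real.zero_rpow (by linarith : p ≠ 0)]
    have : HasDerivAt (fun y : ℝ => |y| ^ p) 0 0 := by
      rw [hasDerivAt_iff_tendsto_slope]
      have hb : ∀ y : ℝ, ‖slope (fun y : ℝ => |y| ^ p) 0 y‖ ≤ |y| ^ (p - 1) := by
        intro y
        rcases eq_or_ne y 0 with rfl | hy
        · simpa [slope] using Real.rpow_nonneg (le_refl (0:ℝ)) (p - 1)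
        · rw [slope_def_field, h0, sub_zero, sub_zero]
          rw [norm_div, Real.norm_eq_abs, Real.norm_eq_abs,
            Real.abs_rpow_of_nonneg (abs_nonneg y), abs_abs]
          rw [Real.rpow_sub (abs_pos.mpr hy), Real.rpow_one]
      have hlim : Filter.Tendsto (fun y : ℝ => |y| ^ (p - 1)) (nhds 0) (nhds 0) := by
        have hc : ContinuousAt (fun z : ℝ => z ^ (p - 1)) (|(0:ℝ)|) := by
          simpa using Real.continuousAt_rpow_const 0 (p - 1) (Or.inr (by linarith : (0:ℝ) ≤ p - 1))
        have habs : ContinuousAt (abs : ℝ → ℝ) (0:ℝ) := continuous_abs.continuousAt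
        have hcomp := hc.comp habs
        simpa [Function.comp_def, Real.zero_rpow (by linarith : p - 1 ≠ 0)] using hcomp.tendsto
      exact squeeze_zero_norm (fun y => hb y) (hlim.mono_left nhdsWithin_le_nhds)
    simpa using this
  · have hne : x ≠ 0 := ne_of_gt hx
    have h1 : HasDerivAt (fun y : ℝ => y ^ p) (p * x ^ (p - 1)) x :=
      Real.hasDerivAt_rpow_const (Or.inl hne)
    have h2 : (fun y : ℝ => |y| ^ p) =ᶠ[nhds x] fun y => y ^ p := by
      filter_upwards [Ioi_mem_nhds hx] with y hy
      rw [abs_of_pos hy]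
    refine (h1.congr_of_eventuallyEq h2).congr_deriv ?_
    have : x ^ (p - 1) = x ^ (p - 2) * x := by
      rw [← Real.rpow_add_one hne]; ring_nf
    rw [abs_of_pos hx, this]; ring

/-- Along any solution φ of EQ_{λ,n,q} on (0,∞), the energy
E(t) = (1/2)φ'(t)² − (λ/2)φ(t)² + |φ(t)|^{q+1}/(q+1) is differentiable with
E'(t) = −(n−1)((e^{2t}+1)/(e^{2t}−1))φ'(t)² ≤ 0, hence E is nonincreasing on (0,∞). -/
theorem energy_monotone
    (n : ℕ) (hn : 2 ≤ n) (lam q : ℝ) (hq : 1 < q)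
    (φ φ' φ'' : ℝ → ℝ)
    (hd1 : ∀ t ∈ Ioi (0:ℝ), HasDerivAt φ (φ' t) t)
    (hd2 : ∀ t ∈ Ioi (0:ℝ), HasDerivAt φ' (φ'' t) t)
    (hode : ∀ t ∈ Ioi (0:ℝ),
      φ'' t + ((n : ℝ) - 1) * ((exp (2*t) + 1) / (exp (2*t) - 1)) * φ' t
        = lam * φ t - |φ t| ^ (q - 1) * φ t)
    (E : ℝ → ℝ)
    (hE : ∀ t, E t = (1/2) * (φ' t)^2 - (lam/2) * (φ t)^2 + |φ t| ^ (q + 1) / (q + 1)) :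
    (∀ t ∈ Ioi (0:ℝ),
      HasDerivAt E (-((n : ℝ) - 1) * ((exp (2*t) + 1) / (exp (2*t) - 1)) * (φ' t)^2) t ∧
      -((n : ℝ) - 1) * ((exp (2*t) + 1) / (exp (2*t) - 1)) * (φ' t)^2 ≤ 0) ∧
    AntitoneOn E (Ioi (0:ℝ)) := by
  have hq1 : q + 1 ≠ 0 := by linarith
  have hEfun : E = fun t => (1/2) * (φ' t)^2 - (lam/2) * (φ t)^2 + |φ t| ^ (q + 1) / (q + 1) :=
    funext hE
  have key : ∀ t ∈ Ioi (0:ℝ),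
      HasDerivAt E (-((n : ℝ) - 1) * ((exp (2*t) + 1) / (exp (2*t) - 1)) * (φ' t)^2) t := by
    intro t ht
    have hA : HasDerivAt (fun s => |φ s| ^ (q + 1))
        ((q + 1) * |φ t| ^ (q + 1 - 2) * φ t * φ' t) t := by
      have := (abs_rpow_hasDerivAt (by linarith : (1:ℝ) < q + 1) (φ t)).comp t (hd1 t ht)
      simpa [mul_comm, mul_assoc, mul_left_comm, Function.comp_def] using this
    have h1 : HasDerivAt (fun s => (1/2) * (φ' s)^2) ((1/2) * (2 * φ' t * φ'' t)) t :=
      (((hd2 t ht).pow 2).const_mul (1/2)).congr_deriv (by ring)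
    have h2 : HasDerivAt (fun s => (lam/2) * (φ s)^2) ((lam/2) * (2 * φ t * φ' t)) t :=
      (((hd1 t ht).pow 2).const_mul (lam/2)).congr_deriv (by ring)
    have h3 : HasDerivAt (fun s => |φ s| ^ (q + 1) / (q + 1))
        (((q + 1) * |φ t| ^ (q + 1 - 2) * φ t * φ' t) / (q + 1)) t := hA.div_const _
    have hD : HasDerivAt E
        ((1/2) * (2 * φ' t * φ'' t) - (lam/2) * (2 * φ t * φ' t)
          + ((q + 1) * |φ t| ^ (q + 1 - 2) * φ t * φ' t) / (q + 1)) t := by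
      rw [hEfun]; exact (h1.sub h2).add h3
    refine hD.congr_deriv ?_
    have hode' := hode t ht
    have hexp : q + 1 - 2 = q - 1 := by ring
    rw [hexp]
    have hcan : (q + 1) * |φ t| ^ (q - 1) * φ t * φ' t / (q + 1)
        = |φ t| ^ (q - 1) * φ t * φ' t := by
      field_simp
    rw [hcan]
    linear_combination (φ' t) * hode'
  have keyle : ∀ t ∈ Ioi (0:ℝ),
      -((n : ℝ) - 1) * ((exp (2*t) + 1) / (exp (2*t) - 1)) * (φ' t)^2 ≤ 0 := by
    intro t ht
    have hden : (0:ℝ) < exp (2*t) - 1 := by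
      have : (1:ℝ) < exp (2*t) := by
        have := Real.exp_pos (2*t)
        calc (1:ℝ) = exp 0 := by simp
        _ < exp (2*t) := Real.exp_lt_exp.mpr (by simpa using mul_pos two_pos (mem_Ioi.mp ht))
      linarith
    have hnum : (0:ℝ) ≤ exp (2*t) + 1 := by positivity
    have hc : (0:ℝ) ≤ (exp (2*t) + 1) / (exp (2*t) - 1) := div_nonneg hnum hden.le
    have hn' : (0:ℝ) ≤ (n:ℝ) - 1 := by
      have : (2:ℝ) ≤ n := by exact_mod_cast hn
      linarith
    have : (0:ℝ) ≤ ((n:ℝ) - 1) * ((exp (2*t) + 1) / (exp (2*t) - 1)) * (φ' t)^2 :=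
      mul_nonneg (mul_nonneg hn' hc) (sq_nonneg _)
    linarith
  refine ⟨fun t ht => ⟨key t ht, keyle t ht⟩, ?_⟩
  exact antitoneOn_of_deriv_nonpos (convex_Ioi 0)
    (fun t ht => (key t ht).continuousAt.continuousWithinAt)
    (fun t ht => by
      rw [interior_Ioi] at ht
      exact (key t ht).differentiableAt.differentiableWithinAt)
    (fun t ht => by
      rw [interior_Ioi] at ht
      rw [(key t ht).deriv]
      exact keyle t ht)
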